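/- Let V be a finite vertex set, let k be a positive integer, and let C be a spanning subgraph of a graph G on V such that κ(x,y;C) ≥ min{κ(x,y;G), k} for all vertices x, y ∈ V. Then for every graph H on V, the graph G ∪ H is k-vertex connected if and only if the graph C ∪ H is k-vertex connected. -/

import Mathlib

/-- The local vertex-connectivity `κ(x,y;G)`: the maximum number of pairwise
internally vertex-disjoint paths between `x` and `y` in `G`. -/
noncomputable def localVertexConn {V : Type*} (G : SimpleGraph V) (x y : V) : ℕ :=
  sSup {n : ℕ | ∃ P : Fin n → G.Path x y, Function.Injective P ∧
    Pairwise fun i j => ∀ v, v ∈ (P i).1.support → v ∈ (P j).1.support → v = x ∨ v = y}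

/-- `G` is `k`-vertex connected: the removal of any `k − 1` vertices leaves the
graph connected. -/
def IsKVertexConnected {V : Type*} (G : SimpleGraph V) (k : ℕ) : Prop :=
  ∀ S : Finset V, S.card = k - 1 → (G.induce ((S : Set V)ᶜ)).Connected

section Aux

variable {V : Type*} [Fintype V]

/-- The defining set of `localVertexConn`. -/
private def famSet (G : SimpleGraph V) (x y : V) : Set ℕ :=
  {n : ℕ | ∃ P : Fin n → G.Path x y, Function.Injective P ∧
    Pairwise fun i j => ∀ v, v ∈ (P i).1.support → v ∈ (P j).1.support → v = x ∨ v = y}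

private lemma localVertexConn_def (G : SimpleGraph V) (x y : V) :
    localVertexConn G x y = sSup (famSet G x y) := rfl

private lemma famSet_bddAbove (G : SimpleGraph V) (x y : V) : BddAbove (famSet G x y) := by
  classical
  refine ⟨Fintype.card (G.Path x y), ?_⟩
  rintro n ⟨P, hinj, -⟩
  simpa using Fintype.card_le_of_injective P hinj

private lemma famSet_zero (G : SimpleGraph V) (x y : V) : 0 ∈ famSet G x y := by
  refine ⟨Fin.elim0, fun i => i.elim0, ?_⟩
  intro i j _
  exact i.elim0

private lemma localVertexConn_mem (G : SimpleGraph V) (x y : V) :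
    localVertexConn G x y ∈ famSet G x y :=
  Nat.sSup_mem ⟨0, famSet_zero G x y⟩ (famSet_bddAbove G x y)

private lemma le_localVertexConn {G : SimpleGraph V} {x y : V} {n : ℕ}
    (hn : n ∈ famSet G x y) : n ≤ localVertexConn G x y :=
  le_csSup (famSet_bddAbove G x y) hn

private lemma famSet_mono {G : SimpleGraph V} {x y : V} {m n : ℕ} (hmn : m ≤ n)
    (hn : n ∈ famSet G x y) : m ∈ famSet G x y := by
  obtain ⟨P, hinj, hpair⟩ := hn
  refine ⟨fun i => P (Fin.castLE hmn i), ?_, ?_⟩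
  · intro i j h
    exact Fin.castLE_injective hmn (hinj h)
  · intro i j hij
    exact hpair (fun hc => hij (Fin.castLE_injective hmn hc))

/-- For an edge `uv ∈ G \ C` with `C ≤ G`, appending the edge path to a maximum
family of internally disjoint `C`-paths increases the count by one. -/
private lemma localVertexConn_lt_of_adj {G C : SimpleGraph V} (hCG : C ≤ G) {u v : V}
    (huv : G.Adj u v) (hC : ¬ C.Adj u v) :
    localVertexConn C u v + 1 ≤ localVertexConn G u v := by
  classical
  obtain ⟨P, hinj, hpair⟩ := localVertexConn_mem C u v
  have hcoe : ⇑(SimpleGraph.Hom.ofLE hCG) = id := rfl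
  have hfinj : Function.Injective ⇑(SimpleGraph.Hom.ofLE hCG) := by
    rw [hcoe]; exact fun a b h => h
  -- the transfer of paths from C to G
  let F : C.Path u v → G.Path u v := fun p => ⟨p.1.mapLe hCG, p.2.mapLe hCG⟩
  have hFinj : Function.Injective F := by
    intro p q hpq
    have := congrArg Subtype.val hpq
    exact Subtype.ext (SimpleGraph.Walk.map_injective_of_injective hfinj u v this)
  have hFsupp : ∀ p : C.Path u v, (F p).1.support = p.1.support := by
    intro p
    show (p.1.map _).support = p.1.support
    rw [SimpleGraph.Walk.support_map, hcoe, List.map_id]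
  have hFedges : ∀ p : C.Path u v, (F p).1.edges = p.1.edges := by
    intro p
    show (p.1.map _).edges = p.1.edges
    rw [SimpleGraph.Walk.edges_map, hcoe, Sym2.map_id, List.map_id]
  have hnotsingleton : ∀ p : C.Path u v, F p ≠ SimpleGraph.Path.singleton huv := by
    intro p hEq
    have hedge : s(u, v) ∈ (F p).1.edges := by
      rw [hEq]
      exact SimpleGraph.Path.mk'_mem_edges_singleton huv
    rw [hFedges] at hedge
    exact hC (SimpleGraph.Walk.adj_of_mem_edges _ hedge)
  let Q : Fin (localVertexConn C u v + 1) → G.Path u v := fun i =>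
    if h : (i : ℕ) < localVertexConn C u v then F (P ⟨i, h⟩) else SimpleGraph.Path.singleton huv
  have hsing : ∀ w : V, w ∈ (SimpleGraph.Path.singleton huv : G.Walk u v).support →
      w = u ∨ w = v := by
    intro w hw
    have : w ∈ (SimpleGraph.Walk.cons huv SimpleGraph.Walk.nil).support := hw
    simpa using this
  have hQmem : (localVertexConn C u v + 1) ∈ famSet G u v := by
    refine ⟨Q, ?_, ?_⟩
    · intro i j hij
      by_cases hi : (i : ℕ) < localVertexConn C u v <;> by_cases hj : (j : ℕ) < localVertexConn C u v
      · simp only [Q, dif_pos hi, dif_pos hj] at hij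
        have h1 : (⟨(i : ℕ), hi⟩ : Fin (localVertexConn C u v)) = ⟨(j : ℕ), hj⟩ := hinj (hFinj hij)
        have h2 : (i : ℕ) = (j : ℕ) := by simpa using h1
        exact Fin.ext h2
      · simp only [Q, dif_pos hi, dif_neg hj] at hij
        exact absurd hij (hnotsingleton _)
      · simp only [Q, dif_neg hi, dif_pos hj] at hij
        exact absurd hij.symm (hnotsingleton _)
      · exact Fin.ext (by omega : (i : ℕ) = (j : ℕ))
    · intro i j hij w hwi hwj
      by_cases hi : (i : ℕ) < localVertexConn C u v <;> by_cases hj : (j : ℕ) < localVertexConn C u v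
      · simp only [Q, dif_pos hi, dif_pos hj] at hwi hwj
        rw [hFsupp] at hwi hwj
        have hne : (⟨(i : ℕ), hi⟩ : Fin (localVertexConn C u v)) ≠ ⟨(j : ℕ), hj⟩ := by
          intro hcon
          have h2 : (i : ℕ) = (j : ℕ) := by simpa using hcon
          exact hij (Fin.ext h2)
        exact hpair hne w hwi hwj
      · simp only [Q, dif_neg hj] at hwj
        exact hsing w hwj
      · simp only [Q, dif_neg hi] at hwi
        exact hsing w hwi
      · exact absurd (Fin.ext (by omega : (i : ℕ) = (j : ℕ))) hij
  exact le_localVertexConn hQmem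

/-- Under the certificate hypothesis, every edge of `G` not in `C` has large
local connectivity in `C`. -/
private lemma k_le_localVertexConn {G C : SimpleGraph V} {k : ℕ} (hCG : C ≤ G)
    (hκ : ∀ x y : V, min (localVertexConn G x y) k ≤ localVertexConn C x y)
    {u v : V} (huv : G.Adj u v) (hC : ¬ C.Adj u v) : k ≤ localVertexConn C u v := by
  by_contra hcon
  push_neg at hcon
  have h1 := localVertexConn_lt_of_adj hCG huv hC
  have h2 := hκ u v
  have h3 : localVertexConn C u v + 1 ≤ min (localVertexConn G u v) k :=
    le_min h1 (by omega)
  omega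

/-- If `κ(u,v;C) ≥ k` and `|S| = k - 1` with `u, v ∉ S`, some `C`-path from `u`
to `v` avoids `S`. -/
private lemma exists_walk_avoid {C : SimpleGraph V} {u v : V} {k : ℕ} (hk : 0 < k)
    (h : k ≤ localVertexConn C u v) (S : Finset V) (hcard : S.card = k - 1)
    (hu : u ∉ S) (hv : v ∉ S) :
    ∃ W : C.Walk u v, ∀ w ∈ W.support, w ∉ S := by
  classical
  obtain ⟨P, hinj, hpair⟩ := famSet_mono h (localVertexConn_mem C u v)
  by_contra hcon
  push_neg at hcon
  have hcon' : ∀ i : Fin k, ∃ w ∈ (P i : C.Walk u v).support, w ∈ S := fun i =>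
    hcon (P i)
  choose g hg1 hg2 using hcon'
  have hginj : Function.Injective g := by
    intro i j hij
    by_contra hne
    have hmem : g i ∈ (P j : C.Walk u v).support := hij ▸ hg1 j
    rcases hpair hne (g i) (hg1 i) hmem with h' | h'
    · exact hu (h' ▸ hg2 i)
    · exact hv (h' ▸ hg2 i)
  have : k ≤ S.card := by
    have hinj2 : Function.Injective (fun i : Fin k => (⟨g i, hg2 i⟩ : {x // x ∈ S})) := by
      intro i j hij
      exact hginj (congrArg Subtype.val hij)
    simpa [Fintype.card_coe] using Fintype.card_le_of_injective _ hinj2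
  omega

/-- A walk avoiding the complement of `s` induces reachability in `G.induce s`. -/
private lemma reachable_induce_of_walk {C : SimpleGraph V} {s : Set V} :
    ∀ {u v : V} (W : C.Walk u v) (hW : ∀ w ∈ W.support, w ∈ s),
      (C.induce s).Reachable ⟨u, hW u W.start_mem_support⟩ ⟨v, hW v W.end_mem_support⟩ := by
  intro u v W
  induction W with
  | nil => intro _; rfl
  | @cons a b v' hadj p ih =>
    intro hW
    have hb : ∀ w ∈ p.support, w ∈ s := fun w hw => hW w (by simp [hw])
    have ha : a ∈ s := hW a (by simp)
    have hb' : b ∈ s := hb b p.start_mem_support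
    have hstep : (C.induce s).Adj ⟨a, ha⟩ ⟨b, hb'⟩ := by
      simpa using hadj
    exact hstep.reachable.trans (ih hb)

end Aux

/-- If `C` is a spanning subgraph of `G` with `κ(x,y;C) ≥ min{κ(x,y;G), k}` for all
vertices `x, y`, then for every graph `H` on `V`, the graph `G ∪ H` is `k`-vertex
connected iff `C ∪ H` is `k`-vertex connected. -/
theorem stmt_3 {V : Type*} [Fintype V] (k : ℕ) (hk : 0 < k)
    (G C : SimpleGraph V) (hCG : C ≤ G)
    (hκ : ∀ x y : V, min (localVertexConn G x y) k ≤ localVertexConn C x y) :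
    ∀ H : SimpleGraph V, IsKVertexConnected (G ⊔ H) k ↔ IsKVertexConnected (C ⊔ H) k := by
  intro H
  have hle : C ⊔ H ≤ G ⊔ H := sup_le_sup_right hCG H
  constructor
  · -- hard direction
    intro hG S hS
    have hGS := hG S hS
    rw [SimpleGraph.connected_iff]
    rw [SimpleGraph.connected_iff] at hGS
    refine ⟨?_, hGS.2⟩
    intro p q
    obtain ⟨W⟩ := hGS.1 p q
    induction W with
    | nil => rfl
    | @cons a b q' hadj p' ih =>
      refine SimpleGraph.Reachable.trans ?_ ih
      have hadj' : G.Adj a.val b.val ∨ H.Adj a.val b.val := by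
        simpa using hadj
      have haS : a.val ∉ S := fun h => a.property (Finset.mem_coe.mpr h)
      have hbS : b.val ∉ S := fun h => b.property (Finset.mem_coe.mpr h)
      rcases hadj' with hg | hh
      · by_cases hc : C.Adj a.val b.val
        · have : ((C ⊔ H).induce ((S : Set V)ᶜ)).Adj a b := by
            simp only [SimpleGraph.comap_adj, SimpleGraph.sup_adj]
            exact Or.inl hc
          exact this.reachable
        · have hkle := k_le_localVertexConn hCG hκ hg hc
          obtain ⟨W', hW'⟩ := exists_walk_avoid hk hkle S hS haS hbS
          have hW'' : ∀ w ∈ W'.support, w ∈ ((S : Set V)ᶜ) := by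
            intro w hw
            simpa using hW' w hw
          have hreach := reachable_induce_of_walk (s := ((S : Set V)ᶜ)) W' hW''
          have hmono : C.induce ((S : Set V)ᶜ) ≤ (C ⊔ H).induce ((S : Set V)ᶜ) := by
            intro x y hxy
            simp only [SimpleGraph.comap_adj, SimpleGraph.sup_adj] at hxy ⊢
            exact Or.inl hxy
          exact hreach.mono hmono
      · have : ((C ⊔ H).induce ((S : Set V)ᶜ)).Adj a b := by
          simp only [SimpleGraph.comap_adj, SimpleGraph.sup_adj]
          exact Or.inr hh
        exact this.reachable
  · -- easy direction
    intro hC S hS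
    have hmono : (C ⊔ H).induce ((S : Set V)ᶜ) ≤ (G ⊔ H).induce ((S : Set V)ᶜ) := by
      intro x y hxy
      simp only [SimpleGraph.comap_adj] at hxy ⊢
      exact hle hxy
    exact (hC S hS).mono hmono
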